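/- Let X and X̄ be matrices in GL(n,ℝ) such that every root λ ∈ ℂ of the characteristic polynomial of X and of X̄ satisfies |λ| ≤ 1, and suppose that X or X̄ has a characteristic root of absolute value exactly 1. Let S, S̄ be symmetric positive definite real n×n matrices, and define c := [[X, 0], [X + (Xᵀ)⁻¹S, (Xᵀ)⁻¹]] and c̄ := [[(X̄ᵀ)⁻¹, −(X̄ᵀ)⁻¹ − S̄X̄], [0, X̄]], both elements of Sp(2n,ℝ). Then c̄ and c⁻¹ are not conjugate in Sp(2n,ℝ): there is no g ∈ Sp(2n,ℝ) with g·c̄·g⁻¹ = c⁻¹. -/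

import Mathlib

open Matrix

/-- The standard symplectic form matrix `J = [[0, 1], [-1, 0]]` in `2n × 2n` block form. -/
def Jmat (n : ℕ) : Matrix (Fin n ⊕ Fin n) (Fin n ⊕ Fin n) ℝ :=
  Matrix.fromBlocks 0 1 (-1) 0

/-- Membership in the real symplectic group `Sp(2n, ℝ)`: `gᵀ J g = J`. -/
def IsSymplectic {n : ℕ} (g : Matrix (Fin n ⊕ Fin n) (Fin n ⊕ Fin n) ℝ) : Prop :=
  gᵀ * Jmat n * g = Jmat n

namespace Stmt13
open Polynomial

section Gen
variable {m : Type*} [Fintype m] [DecidableEq m]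

lemma my_eval_charpoly {R : Type*} [CommRing R] (M : Matrix m m R) (μ : R) :
    M.charpoly.eval μ = (μ • (1 : Matrix m m R) - M).det := by
  have h2 : (charmatrix M).map (evalRingHom μ) = μ • (1 : Matrix m m R) - M := by
    ext i j
    by_cases h : i = j
    · subst h; simp [charmatrix_apply_eq]
    · simp [charmatrix_apply_ne _ _ _ h, Matrix.one_apply_ne h, h]
  rw [Matrix.charpoly, ← h2]
  rw [show (charmatrix M).map (evalRingHom μ) = (evalRingHom μ).mapMatrix (charmatrix M) from rfl,
    ← RingHom.map_det]
  rfl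

/-- eigenvector from root of charpoly, over a field -/
lemma eigvec_of_root {K : Type*} [Field K] (M : Matrix m m K) {μ : K}
    (h : M.charpoly.IsRoot μ) : ∃ x : m → K, x ≠ 0 ∧ M *ᵥ x = μ • x := by
  have hdet : (μ • (1 : Matrix m m K) - M).det = 0 := by
    rw [← my_eval_charpoly]; exact h
  obtain ⟨x, hx, hx0⟩ := (Matrix.exists_mulVec_eq_zero_iff).2 hdet
  refine ⟨x, hx, ?_⟩
  have := hx0
  rw [sub_mulVec, smul_mulVec, one_mulVec, sub_eq_zero] at this
  exact this.symm

lemma root_of_eigvec {K : Type*} [Field K] (M : Matrix m m K) {μ : K} {x : m → K}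
    (hx : x ≠ 0) (h : M *ᵥ x = μ • x) : M.charpoly.IsRoot μ := by
  have : (μ • (1 : Matrix m m K) - M) *ᵥ x = 0 := by
    rw [sub_mulVec, smul_mulVec, one_mulVec, h, sub_self]
  have hdet : (μ • (1 : Matrix m m K) - M).det = 0 :=
    (Matrix.exists_mulVec_eq_zero_iff).1 ⟨x, hx, this⟩
  rw [IsRoot, my_eval_charpoly]; exact hdet

end Gen

variable {n : ℕ}


noncomputable def Jc (n : ℕ) : Matrix (Fin n ⊕ Fin n) (Fin n ⊕ Fin n) ℂ :=
  fromBlocks 0 1 (-1) 0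

noncomputable def pr (u v : Fin n ⊕ Fin n → ℂ) : ℂ := star u ⬝ᵥ ((Jc n) *ᵥ v)

lemma real_star_mulVec {m : Type*} [Fintype m] {M : Matrix m m ℂ}
    (hM : M.map (starRingEnd ℂ) = M) (v : m → ℂ) :
    star (M *ᵥ v) = M *ᵥ star v := by
  rw [star_mulVec]
  have hMH : Mᴴ = Mᵀ := by
    rw [conjTranspose]
    nth_rewrite 2 [← hM]
    rfl
  rw [hMH, vecMul_transpose]

lemma star_sum_elim {a b : Type*} (x : a → ℂ) (y : b → ℂ) :
    star (Sum.elim x y) = Sum.elim (star x) (star y) := by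
  funext i; cases i <;> rfl

lemma smul_sum_elim {a b : Type*} (c : ℂ) (x : a → ℂ) (y : b → ℂ) :
    c • (Sum.elim x y) = Sum.elim (c • x) (c • y) := by
  funext i; cases i <;> rfl

lemma sub_sum_elim {a b : Type*} (x x' : a → ℂ) (y y' : b → ℂ) :
    Sum.elim x y - Sum.elim x' y' = Sum.elim (x - x') (y - y') := by
  funext i; cases i <;> rfl

lemma Jc_mulVec (x y : Fin n → ℂ) : (Jc n) *ᵥ Sum.elim x y = Sum.elim y (-x) := by
  rw [Jc, fromBlocks_mulVec]
  simp [neg_mulVec]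

lemma dual_eig {Y D : Matrix (Fin n) (Fin n) ℂ} (hYD : Yᵀ * D = 1)
    (hY : Y.map (starRingEnd ℂ) = Y) {μ : ℂ} (hμ : μ * (starRingEnd ℂ) μ = 1)
    {x : Fin n → ℂ} (hx : Y *ᵥ x = μ • x) :
    star x ᵥ* D = μ • star x := by
  have hconj : Y *ᵥ star x = (starRingEnd ℂ) μ • star x := by
    have := congrArg star hx
    rw [real_star_mulVec hY, star_smul] at this
    exact this
  have h2 : (starRingEnd ℂ) μ • (star x ᵥ* D) = star x := by
    rw [← smul_vecMul, ← hconj, ← vecMul_transpose Y (star x), vecMul_vecMul, hYD, vecMul_one]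
  calc star x ᵥ* D = (μ * (starRingEnd ℂ) μ) • (star x ᵥ* D) := by rw [hμ, one_smul]
    _ = μ • ((starRingEnd ℂ) μ • (star x ᵥ* D)) := by rw [mul_smul]
    _ = μ • star x := by rw [h2]


lemma pr_flip {H : Matrix (Fin n ⊕ Fin n) (Fin n ⊕ Fin n) ℂ}
    (hH : H.map (starRingEnd ℂ) = H) (hHJ : Hᵀ * Jc n * H = -(Jc n)) (u v : Fin n ⊕ Fin n → ℂ) :
    pr (H *ᵥ u) (H *ᵥ v) = - pr u v := by
  unfold pr
  rw [real_star_mulVec hH, mulVec_mulVec, dotProduct_mulVec, ← vecMul_transpose,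
    vecMul_vecMul, ← Matrix.mul_assoc, hHJ, vecMul_neg, neg_dotProduct, dotProduct_mulVec]

/-- the key sign identity -/
lemma identity_form {Y S D : Matrix (Fin n) (Fin n) ℂ} (hYD : Yᵀ * D = 1)
    (hY : Y.map (starRingEnd ℂ) = Y) {μ : ℂ} (hμ : μ * (starRingEnd ℂ) μ = 1)
    {x : Fin n → ℂ} (hx : Y *ᵥ x = μ • x) (y : Fin n → ℂ) :
    pr (Sum.elim x y) ((fromBlocks Y 0 (-(D + S * Y)) D - μ • 1) *ᵥ Sum.elim x y)
      = -(μ * (star x ⬝ᵥ x + star x ⬝ᵥ (S *ᵥ x))) := by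
  have hdual : ∀ z : Fin n → ℂ, star x ⬝ᵥ (D *ᵥ z) = μ * (star x ⬝ᵥ z) := by
    intro z
    rw [dotProduct_mulVec, dual_eig hYD hY hμ hx, smul_dotProduct, smul_eq_mul]
  have hA : (fromBlocks Y 0 (-(D + S * Y)) D - μ • 1) *ᵥ Sum.elim x y
      = Sum.elim (0 : Fin n → ℂ) ((-(D + S * Y)) *ᵥ x + D *ᵥ y - μ • y) := by
    rw [sub_mulVec, smul_mulVec, one_mulVec, fromBlocks_mulVec]
    simp only [Sum.elim_comp_inl, Sum.elim_comp_inr, zero_mulVec, add_zero, hx,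
      smul_sum_elim, sub_sum_elim, sub_self]
  rw [pr, hA, Jc_mulVec, star_sum_elim, sumElim_dotProduct_sumElim]
  rw [neg_zero, dotProduct_zero, add_zero]
  have hSY : (-(D + S * Y)) *ᵥ x = -(D *ᵥ x) - μ • (S *ᵥ x) := by
    rw [neg_mulVec, add_mulVec, ← mulVec_mulVec, hx, mulVec_smul]
    abel
  rw [hSY]
  rw [dotProduct_sub, dotProduct_add, dotProduct_sub, dotProduct_neg, hdual x, hdual y,
    dotProduct_smul, dotProduct_smul]
  simp only [smul_eq_mul]
  ring


lemma self_dot (x : Fin n → ℂ) :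
    star x ⬝ᵥ x = ((∑ i, Complex.normSq (x i) : ℝ) : ℂ) := by
  rw [dotProduct]
  push_cast
  refine Finset.sum_congr rfl fun i _ => ?_
  rw [Pi.star_apply, RCLike.star_def, Complex.normSq_eq_conj_mul_self]

lemma sub_mulVec_inl (Y D E : Matrix (Fin n) (Fin n) ℂ) (μ : ℂ) (v : Fin n ⊕ Fin n → ℂ) :
    ((fromBlocks Y 0 E D - μ • 1) *ᵥ v) ∘ Sum.inl
      = Y *ᵥ (v ∘ Sum.inl) - μ • (v ∘ Sum.inl) := by
  rw [sub_mulVec, smul_mulVec, one_mulVec, fromBlocks_mulVec]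
  funext i
  simp


section Master

variable {Ya Sa Da Yb Sb Db : Matrix (Fin n) (Fin n) ℂ}
variable {H : Matrix (Fin n ⊕ Fin n) (Fin n ⊕ Fin n) ℂ} {μ : ℂ}

/-- one step of the induction; proves the `b`-side statement at `k+1`. -/
lemma step
    (hYDa : Yaᵀ * Da = 1) (hYa : Ya.map (starRingEnd ℂ) = Ya)
    (hYDb : Ybᵀ * Db = 1) (hYb : Yb.map (starRingEnd ℂ) = Yb)
    (hSa : ∀ x : Fin n → ℂ, ∃ r : ℝ, 0 ≤ r ∧ star x ⬝ᵥ (Sa *ᵥ x) = (r : ℂ))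
    (hSb : ∀ x : Fin n → ℂ, ∃ r : ℝ, 0 ≤ r ∧ star x ⬝ᵥ (Sb *ᵥ x) = (r : ℂ))
    (hH : H.map (starRingEnd ℂ) = H) (hHJ : Hᵀ * Jc n * H = -(Jc n))
    (hint : H * (fromBlocks Yb 0 (-(Db + Sb * Yb)) Db)
      = (fromBlocks Ya 0 (-(Da + Sa * Ya)) Da) * H)
    (hμ : μ * (starRingEnd ℂ) μ = 1) (k : ℕ)
    (IHa : ∀ v, ((fromBlocks Ya 0 (-(Da + Sa * Ya)) Da - μ • 1) ^ k) *ᵥ v = 0 → v ∘ Sum.inl = 0)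
    (IHb : ∀ v, ((fromBlocks Yb 0 (-(Db + Sb * Yb)) Db - μ • 1) ^ k) *ᵥ v = 0 → v ∘ Sum.inl = 0) :
    ∀ v, ((fromBlocks Yb 0 (-(Db + Sb * Yb)) Db - μ • 1) ^ (k+1)) *ᵥ v = 0 → v ∘ Sum.inl = 0 := by
  intro v hv
  set Ab := fromBlocks Yb 0 (-(Db + Sb * Yb)) Db with hAb
  set Aa := fromBlocks Ya 0 (-(Da + Sa * Ya)) Da with hAa
  set Mb := Ab - μ • 1 with hMb
  set Ma := Aa - μ • 1 with hMa
  have hintM : H * Mb = Ma * H := by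
    rw [hMb, hMa, Matrix.mul_sub, Matrix.sub_mul, hint]
    congr 1
    rw [Matrix.mul_smul, Matrix.smul_mul, Matrix.mul_one, Matrix.one_mul]
  have hpow : ∀ j : ℕ, H * Mb ^ j = Ma ^ j * H := by
    intro j
    induction j with
    | zero => simp
    | succ j ih =>
      rw [pow_succ, pow_succ, ← Matrix.mul_assoc, ih, Matrix.mul_assoc, hintM,
        ← Matrix.mul_assoc]
  -- b-side eigen relation
  have hub : (Mb ^ k) *ᵥ (Mb *ᵥ v) = 0 := by
    rw [mulVec_mulVec, ← pow_succ, hv]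
  have hxb0 : (Mb *ᵥ v) ∘ Sum.inl = 0 := IHb _ hub
  have heigb : Yb *ᵥ (v ∘ Sum.inl) = μ • (v ∘ Sum.inl) := by
    have := hxb0
    rw [hMb, hAb, sub_mulVec_inl] at this
    have := sub_eq_zero.mp this
    exact this
  -- a-side
  set w := H *ᵥ v with hw
  have hva : (Ma ^ (k+1)) *ᵥ w = 0 := by
    rw [hw, mulVec_mulVec, ← hpow, ← mulVec_mulVec, hv, mulVec_zero]
  have hua : (Ma ^ k) *ᵥ (Ma *ᵥ w) = 0 := by
    rw [mulVec_mulVec, ← pow_succ, hva]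
  have hxa0 : (Ma *ᵥ w) ∘ Sum.inl = 0 := IHa _ hua
  have heiga : Ya *ᵥ (w ∘ Sum.inl) = μ • (w ∘ Sum.inl) := by
    have := hxa0
    rw [hMa, hAa, sub_mulVec_inl] at this
    exact sub_eq_zero.mp this
  -- identities
  have idb : pr v (Mb *ᵥ v)
      = -(μ * (star (v ∘ Sum.inl) ⬝ᵥ (v ∘ Sum.inl)
          + star (v ∘ Sum.inl) ⬝ᵥ (Sb *ᵥ (v ∘ Sum.inl)))) := by
    have h := identity_form (S := Sb) hYDb hYb hμ heigb (v ∘ Sum.inr)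
    rw [Sum.elim_comp_inl_inr] at h
    rw [hMb, hAb]
    exact h
  have ida : pr w (Ma *ᵥ w)
      = -(μ * (star (w ∘ Sum.inl) ⬝ᵥ (w ∘ Sum.inl)
          + star (w ∘ Sum.inl) ⬝ᵥ (Sa *ᵥ (w ∘ Sum.inl)))) := by
    have h := identity_form (S := Sa) hYDa hYa hμ heiga (w ∘ Sum.inr)
    rw [Sum.elim_comp_inl_inr] at h
    rw [hMa, hAa]
    exact h
  -- flip
  have hflip : pr w (Ma *ᵥ w) = - pr v (Mb *ᵥ v) := by
    have : Ma *ᵥ w = H *ᵥ (Mb *ᵥ v) := by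
      rw [hw, mulVec_mulVec, ← hintM, ← mulVec_mulVec]
    rw [this, hw]
    exact pr_flip hH hHJ v (Mb *ᵥ v)
  -- combine
  obtain ⟨sa, hsa0, hsa⟩ := hSa (w ∘ Sum.inl)
  obtain ⟨sb, hsb0, hsb⟩ := hSb (v ∘ Sum.inl)
  have hμ0 : μ ≠ 0 := by
    intro h; rw [h, zero_mul] at hμ; exact zero_ne_one hμ
  have h1 := ida
  rw [hflip, idb, neg_neg] at h1
  have hQ : (star (w ∘ Sum.inl) ⬝ᵥ (w ∘ Sum.inl)
        + star (w ∘ Sum.inl) ⬝ᵥ (Sa *ᵥ (w ∘ Sum.inl)))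
      + (star (v ∘ Sum.inl) ⬝ᵥ (v ∘ Sum.inl)
        + star (v ∘ Sum.inl) ⬝ᵥ (Sb *ᵥ (v ∘ Sum.inl))) = 0 := by
    apply mul_left_cancel₀ hμ0
    rw [mul_zero, mul_add]
    linear_combination h1
  rw [self_dot, self_dot, hsa, hsb] at hQ
  have hC : (((∑ i, Complex.normSq (w (Sum.inl i))) + sa
      + ((∑ i, Complex.normSq (v (Sum.inl i))) + sb) : ℝ) : ℂ) = 0 := by
    push_cast
    convert hQ using 2 <;> norm_cast
  have hR : (∑ i, Complex.normSq (w (Sum.inl i))) + sa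
      + ((∑ i, Complex.normSq (v (Sum.inl i))) + sb) = 0 := by exact_mod_cast hC
  have hs1 : 0 ≤ ∑ i, Complex.normSq (w (Sum.inl i)) :=
    Finset.sum_nonneg fun i _ => Complex.normSq_nonneg _
  have hs2 : 0 ≤ ∑ i, Complex.normSq (v (Sum.inl i)) :=
    Finset.sum_nonneg fun i _ => Complex.normSq_nonneg _
  have hvz : (∑ i, Complex.normSq (v (Sum.inl i))) = 0 := by linarith
  have := (Finset.sum_eq_zero_iff_of_nonneg
    (fun i _ => Complex.normSq_nonneg (v (Sum.inl i)))).mp hvz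
  funext i
  have hi := this i (Finset.mem_univ i)
  simpa using Complex.normSq_eq_zero.mp hi

lemma master
    (hYDa : Yaᵀ * Da = 1) (hYa : Ya.map (starRingEnd ℂ) = Ya)
    (hYDb : Ybᵀ * Db = 1) (hYb : Yb.map (starRingEnd ℂ) = Yb)
    (hSa : ∀ x : Fin n → ℂ, ∃ r : ℝ, 0 ≤ r ∧ star x ⬝ᵥ (Sa *ᵥ x) = (r : ℂ))
    (hSb : ∀ x : Fin n → ℂ, ∃ r : ℝ, 0 ≤ r ∧ star x ⬝ᵥ (Sb *ᵥ x) = (r : ℂ))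
    {H' : Matrix (Fin n ⊕ Fin n) (Fin n ⊕ Fin n) ℂ}
    (hH : H.map (starRingEnd ℂ) = H) (hHJ : Hᵀ * Jc n * H = -(Jc n))
    (hH' : H'.map (starRingEnd ℂ) = H') (hH'J : H'ᵀ * Jc n * H' = -(Jc n))
    (hint : H * (fromBlocks Yb 0 (-(Db + Sb * Yb)) Db)
      = (fromBlocks Ya 0 (-(Da + Sa * Ya)) Da) * H)
    (hint' : H' * (fromBlocks Ya 0 (-(Da + Sa * Ya)) Da)
      = (fromBlocks Yb 0 (-(Db + Sb * Yb)) Db) * H')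
    (hμ : μ * (starRingEnd ℂ) μ = 1) :
    ∀ k : ℕ,
      (∀ v, ((fromBlocks Ya 0 (-(Da + Sa * Ya)) Da - μ • 1) ^ k) *ᵥ v = 0 → v ∘ Sum.inl = 0) ∧
      (∀ v, ((fromBlocks Yb 0 (-(Db + Sb * Yb)) Db - μ • 1) ^ k) *ᵥ v = 0 → v ∘ Sum.inl = 0) := by
  intro k
  induction k with
  | zero =>
    constructor <;>
    · intro v hv
      rw [pow_zero, one_mulVec] at hv
      rw [hv]
      rfl
  | succ k IH =>
    exact ⟨step hYDb hYb hYDa hYa hSb hSa hH' hH'J hint' hμ k IH.2 IH.1,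
           step hYDa hYa hYDb hYb hSa hSb hH hHJ hint hμ k IH.1 IH.2⟩

/-- final contradiction: an eigenvalue of `Y` whose whole generalized eigenspace for the big
matrix is killed on the first component. -/
lemma final {Y E D : Matrix (Fin n) (Fin n) ℂ} {μ : ℂ} {x₀ : Fin n → ℂ}
    (hx₀ : x₀ ≠ 0) (heig : Y *ᵥ x₀ = μ • x₀)
    (hker : ∀ (k : ℕ) (v : Fin n ⊕ Fin n → ℂ),
      ((fromBlocks Y 0 E D - μ • 1) ^ k) *ᵥ v = 0 → v ∘ Sum.inl = 0) :
    False := by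
  set A := fromBlocks Y 0 E D with hA
  set r := A.charpoly with hr
  set m := r.rootMultiplicity μ with hm
  set q := r /ₘ (X - C μ) ^ m with hq'
  have hr0 : r ≠ 0 := A.charpoly_monic.ne_zero
  have hfac : (X - C μ) ^ m * q = r := r.pow_mul_divByMonic_rootMultiplicity_eq μ
  have hq : q.eval μ ≠ 0 := eval_divByMonic_pow_rootMultiplicity_ne_zero μ hr0
  have hCH : aeval A r = 0 := A.aeval_self_charpoly
  have haevalX : aeval A (X - C μ) = A - μ • 1 := by
    rw [map_sub, aeval_X, aeval_C, Algebra.algebraMap_eq_smul_one]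
  have hsplit : (A - μ • 1) ^ m * aeval A q = 0 := by
    rw [← haevalX, ← map_pow, ← _root_.map_mul, hfac, hCH]
  have hstep : ∀ v : Fin n ⊕ Fin n → ℂ, (A *ᵥ v) ∘ Sum.inl = Y *ᵥ (v ∘ Sum.inl) := by
    intro v
    rw [hA, fromBlocks_mulVec]
    funext i
    simp
  have hpow : ∀ (k : ℕ) (v : Fin n ⊕ Fin n → ℂ),
      ((A ^ k) *ᵥ v) ∘ Sum.inl = (Y ^ k) *ᵥ (v ∘ Sum.inl) := by
    intro k
    induction k with
    | zero => intro v; simp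
    | succ k ih =>
      intro v
      rw [pow_succ, pow_succ, ← mulVec_mulVec, ih, hstep, mulVec_mulVec]
  have haev : ∀ (p : ℂ[X]) (v : Fin n ⊕ Fin n → ℂ),
      ((aeval A p) *ᵥ v) ∘ Sum.inl = (aeval Y p) *ᵥ (v ∘ Sum.inl) := by
    intro p
    induction p using Polynomial.induction_on' with
    | add f g hf hg =>
      intro v
      rw [map_add, map_add, add_mulVec, add_mulVec]
      funext i
      simp only [Pi.add_apply, Function.comp_apply]
      have h1 := congrFun (hf v) i
      have h2 := congrFun (hg v) i
      simp only [Function.comp_apply] at h1 h2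
      rw [← h1, ← h2]
    | monomial k a =>
      intro v
      have e1 : (aeval A) (monomial k a) = a • A ^ k := by
        rw [aeval_monomial, Algebra.algebraMap_eq_smul_one, smul_mul_assoc, one_mul]
      have e2 : (aeval Y) (monomial k a) = a • Y ^ k := by
        rw [aeval_monomial, Algebra.algebraMap_eq_smul_one, smul_mul_assoc, one_mul]
      rw [e1, e2, smul_mulVec, smul_mulVec]
      funext i
      simp only [Pi.smul_apply, Function.comp_apply]
      have h1 := congrFun (hpow k v) i
      simp only [Function.comp_apply] at h1
      rw [h1]
  have hpowY : ∀ k : ℕ, (Y ^ k) *ᵥ x₀ = (μ ^ k) • x₀ := by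
    intro k
    induction k with
    | zero => simp
    | succ k ih =>
      rw [pow_succ, ← mulVec_mulVec, heig, mulVec_smul, ih, smul_smul, ← pow_succ']
  have heigp : ∀ p : ℂ[X], (aeval Y p) *ᵥ x₀ = p.eval μ • x₀ := by
    intro p
    induction p using Polynomial.induction_on' with
    | add f g hf hg => rw [map_add, add_mulVec, hf, hg, eval_add, add_smul]
    | monomial k a =>
      have e2 : (aeval Y) (monomial k a) = a • Y ^ k := by
        rw [aeval_monomial, Algebra.algebraMap_eq_smul_one, smul_mul_assoc, one_mul]
      rw [e2, smul_mulVec, hpowY, eval_monomial, smul_smul]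
  have h0 : ((aeval A q) *ᵥ (Sum.elim x₀ 0)) ∘ Sum.inl = 0 := by
    apply hker m
    rw [mulVec_mulVec, hsplit, zero_mulVec]
  rw [haev, Sum.elim_comp_inl, heigp] at h0
  rcases smul_eq_zero.mp h0 with h | h
  · exact hq h
  · exact hx₀ h

end Master
variable {n : ℕ}

/-- transport of a real positive semidefinite quadratic form to ℂ -/
lemma psd_transport {S : Matrix (Fin n) (Fin n) ℝ} (hsym : Sᵀ = S)
    (hpsd : ∀ y : Fin n → ℝ, 0 ≤ y ⬝ᵥ (S *ᵥ y)) (x : Fin n → ℂ) :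
    ∃ r : ℝ, 0 ≤ r ∧ star x ⬝ᵥ ((S.map (algebraMap ℝ ℂ)) *ᵥ x) = (r : ℂ) := by
  classical
  set Sc := S.map (algebraMap ℝ ℂ) with hSc
  set a : Fin n → ℝ := fun i => (x i).re with ha
  set b : Fin n → ℝ := fun i => (x i).im with hb
  set u : Fin n → ℂ := fun i => ((a i : ℝ) : ℂ) with hu
  set w : Fin n → ℂ := fun i => ((b i : ℝ) : ℂ) with hw
  have hx : x = u + Complex.I • w := by
    funext i
    simp only [hu, hw, Pi.add_apply, Pi.smul_apply, smul_eq_mul]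
    rw [mul_comm]
    exact (Complex.re_add_im (x i)).symm
  have hxs : star x = u - Complex.I • w := by
    funext i
    simp only [Pi.star_apply, hu, hw, Pi.sub_apply, Pi.smul_apply, smul_eq_mul]
    rw [RCLike.star_def, Complex.ext_iff]
    simp [ha, hb]
  -- real bilinear transport
  have key : ∀ p q : Fin n → ℝ,
      (fun i => ((p i : ℝ) : ℂ)) ⬝ᵥ (Sc *ᵥ fun i => ((q i : ℝ) : ℂ))
        = ((p ⬝ᵥ (S *ᵥ q) : ℝ) : ℂ) := by
    intro p q
    have h1 : (Sc *ᵥ fun i => ((q i : ℝ) : ℂ)) = fun i => (((S *ᵥ q) i : ℝ) : ℂ) := by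
      funext i
      rw [hSc]
      exact (RingHom.map_mulVec (algebraMap ℝ ℂ) S q i).symm
    rw [h1]
    rw [show ((fun i => ((p i : ℝ) : ℂ)) ⬝ᵥ fun i => (((S *ᵥ q) i : ℝ) : ℂ))
        = (algebraMap ℝ ℂ) (p ⬝ᵥ (S *ᵥ q)) from (RingHom.map_dotProduct (algebraMap ℝ ℂ) p (S *ᵥ q)).symm]
    rfl
  have hsymm : a ⬝ᵥ (S *ᵥ b) = b ⬝ᵥ (S *ᵥ a) := by
    rw [dotProduct_mulVec]
    have : a ᵥ* S = S *ᵥ a := by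
      conv_lhs => rw [← hsym]
      rw [vecMul_transpose]
    rw [this, dotProduct_comm]
  refine ⟨a ⬝ᵥ (S *ᵥ a) + b ⬝ᵥ (S *ᵥ b), add_nonneg (hpsd a) (hpsd b), ?_⟩
  rw [hxs, hx]
  rw [mulVec_add, mulVec_smul, dotProduct_add, dotProduct_smul, sub_dotProduct,
    sub_dotProduct, smul_dotProduct, smul_dotProduct]
  simp only [smul_eq_mul]
  have e1 := key a a
  have e2 := key a b
  have e3 := key b a
  have e4 := key b b
  rw [show u = fun i => ((a i : ℝ) : ℂ) from rfl, show w = fun i => ((b i : ℝ) : ℂ) from rfl] at *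
  rw [e1, e2, e3, e4, hsymm]
  push_cast
  ring_nf
  rw [Complex.I_sq]
  ring
variable {n : ℕ}

lemma symp_c {X S : Matrix (Fin n) (Fin n) ℝ} (hX : IsUnit X) (hsym : Sᵀ = S) :
    IsSymplectic (fromBlocks X 0 (X + Xᵀ⁻¹ * S) Xᵀ⁻¹) := by
  have hdX : IsUnit X.det := (isUnit_iff_isUnit_det X).mp hX
  have hdXT : IsUnit Xᵀ.det := by rwa [det_transpose]
  have h1 : Xᵀ * Xᵀ⁻¹ = 1 := mul_nonsing_inv _ hdXT
  have h2 : Xᵀ⁻¹ᵀ = X⁻¹ := by rw [← transpose_nonsing_inv, transpose_transpose]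
  have h3 : X⁻¹ * X = 1 := nonsing_inv_mul _ hdX
  have hC : (X + Xᵀ⁻¹ * S)ᵀ * X = Xᵀ * (X + Xᵀ⁻¹ * S) := by
    rw [transpose_add, transpose_mul, h2, hsym, Matrix.add_mul, Matrix.mul_add,
      Matrix.mul_assoc, h3, Matrix.mul_one, ← Matrix.mul_assoc, h1, Matrix.one_mul]
  unfold IsSymplectic Jmat
  rw [fromBlocks_transpose, fromBlocks_multiply, fromBlocks_multiply, fromBlocks_inj]
  refine ⟨?_, ?_, ?_, ?_⟩
  · simp only [Matrix.mul_zero, Matrix.mul_one, Matrix.zero_mul, Matrix.one_mul,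
      zero_add, add_zero, mul_neg_one, Matrix.neg_mul, Matrix.mul_neg, transpose_zero]
    rw [hC]
    abel
  · simp only [Matrix.mul_zero, Matrix.mul_one, Matrix.zero_mul, Matrix.one_mul,
      zero_add, add_zero, mul_neg_one, Matrix.neg_mul, Matrix.mul_neg, transpose_zero, h1]
  · simp only [Matrix.mul_zero, Matrix.mul_one, Matrix.zero_mul, Matrix.one_mul,
      zero_add, add_zero, mul_neg_one, Matrix.neg_mul, Matrix.mul_neg, transpose_zero, h2, h3]
  · simp only [Matrix.mul_zero, Matrix.mul_one, Matrix.zero_mul, Matrix.one_mul,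
      zero_add, add_zero, mul_neg_one, Matrix.neg_mul, Matrix.mul_neg, transpose_zero]

lemma symp_cb {Xb Sb : Matrix (Fin n) (Fin n) ℝ} (hXb : IsUnit Xb) (hsym : Sbᵀ = Sb) :
    IsSymplectic (fromBlocks Xbᵀ⁻¹ (-Xbᵀ⁻¹ - Sb * Xb) 0 Xb) := by
  have hdX : IsUnit Xb.det := (isUnit_iff_isUnit_det Xb).mp hXb
  have hdXT : IsUnit Xbᵀ.det := by rwa [det_transpose]
  have h1 : Xbᵀ * Xbᵀ⁻¹ = 1 := mul_nonsing_inv _ hdXT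
  have h2 : Xbᵀ⁻¹ᵀ = Xb⁻¹ := by rw [← transpose_nonsing_inv, transpose_transpose]
  have h3 : Xb⁻¹ * Xb = 1 := nonsing_inv_mul _ hdX
  unfold IsSymplectic Jmat
  rw [fromBlocks_transpose, fromBlocks_multiply, fromBlocks_multiply, fromBlocks_inj]
  refine ⟨?_, ?_, ?_, ?_⟩
  · simp only [Matrix.mul_zero, Matrix.mul_one, Matrix.zero_mul, Matrix.one_mul,
      zero_add, add_zero, mul_neg_one, Matrix.neg_mul, Matrix.mul_neg, transpose_zero, neg_zero]
  · simp only [Matrix.mul_zero, Matrix.mul_one, Matrix.zero_mul, Matrix.one_mul,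
      zero_add, add_zero, mul_neg_one, Matrix.neg_mul, Matrix.mul_neg, transpose_zero, neg_zero,
      h2, h3]
  · simp only [Matrix.mul_zero, Matrix.mul_one, Matrix.zero_mul, Matrix.one_mul,
      zero_add, add_zero, mul_neg_one, Matrix.neg_mul, Matrix.mul_neg, transpose_zero, neg_zero,
      h1]
  · simp only [Matrix.mul_zero, Matrix.mul_one, Matrix.zero_mul, Matrix.one_mul,
      zero_add, add_zero, mul_neg_one, Matrix.neg_mul, Matrix.mul_neg, transpose_zero, neg_zero,
      transpose_sub, transpose_neg, h2, transpose_mul, Matrix.sub_mul, Matrix.mul_sub,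
      Matrix.neg_mul, h3, hsym, Matrix.mul_assoc, h1]
    abel

variable {n : ℕ}

noncomputable abbrev φm {k l : Type*} (M : Matrix k l ℝ) : Matrix k l ℂ := M.map (algebraMap ℝ ℂ)

lemma φm_real {k l : Type*} (M : Matrix k l ℝ) : (φm M).map (starRingEnd ℂ) = φm M := by
  ext i j
  simp [Matrix.map_apply, Complex.conj_ofReal]

lemma φm_mul {k l m : Type*} [Fintype l] (M : Matrix k l ℝ) (N : Matrix l m ℝ) :
    φm (M * N) = φm M * φm N := by
  exact Matrix.map_mul

lemma φm_one {k : Type*} [Fintype k] [DecidableEq k] : φm (1 : Matrix k k ℝ) = 1 :=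
  Matrix.map_one _ (map_zero _) (map_one _)

lemma φm_transpose {k l : Type*} (M : Matrix k l ℝ) : φm (Mᵀ) = (φm M)ᵀ :=
  Matrix.transpose_map

lemma φm_add {k l : Type*} (M N : Matrix k l ℝ) : φm (M + N) = φm M + φm N := by
  ext i j; simp [Matrix.map_apply]

lemma φm_neg {k l : Type*} (M : Matrix k l ℝ) : φm (-M) = -(φm M) := by
  ext i j; simp [Matrix.map_apply]

lemma φm_sub {k l : Type*} (M N : Matrix k l ℝ) : φm (M - N) = φm M - φm N := by
  ext i j; simp [Matrix.map_apply]

lemma φm_fromBlocks (A B C D : Matrix (Fin n) (Fin n) ℝ) :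
    φm (fromBlocks A B C D) = fromBlocks (φm A) (φm B) (φm C) (φm D) :=
  Matrix.fromBlocks_map A B C D _

/-- inverse of the `c` matrix -/
lemma c_inv {X S : Matrix (Fin n) (Fin n) ℝ} (hX : IsUnit X) :
    (fromBlocks X 0 (X + Xᵀ⁻¹ * S) Xᵀ⁻¹)⁻¹
      = fromBlocks X⁻¹ 0 (-(Xᵀ + S * X⁻¹)) Xᵀ := by
  have hdX : IsUnit X.det := (isUnit_iff_isUnit_det X).mp hX
  have hdXT : IsUnit Xᵀ.det := by rwa [det_transpose]
  have h4 : X * X⁻¹ = 1 := mul_nonsing_inv _ hdX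
  have h5 : Xᵀ⁻¹ * Xᵀ = 1 := nonsing_inv_mul _ hdXT
  apply inv_eq_right_inv
  rw [fromBlocks_multiply]
  have hb21 : (X + Xᵀ⁻¹ * S) * X⁻¹ + Xᵀ⁻¹ * -(Xᵀ + S * X⁻¹) = 0 := by
    rw [Matrix.add_mul, Matrix.mul_neg, Matrix.mul_add, h4, h5, Matrix.mul_assoc,
      ← Matrix.mul_assoc Xᵀ⁻¹ S X⁻¹]
    abel
  rw [hb21]
  simp only [Matrix.mul_zero, Matrix.zero_mul, Matrix.mul_one, Matrix.one_mul,
    zero_add, add_zero, h4, h5]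
  exact fromBlocks_one

section MainGlue

variable {X S Xb Sb : Matrix (Fin n) (Fin n) ℝ}
variable {g : Matrix (Fin n ⊕ Fin n) (Fin n ⊕ Fin n) ℝ}

/-- the swap matrix -/
def Kswap (n : ℕ) : Matrix (Fin n ⊕ Fin n) (Fin n ⊕ Fin n) ℝ := fromBlocks 0 1 1 0

lemma Kswap_mul_Kswap : Kswap n * Kswap n = 1 := by
  rw [Kswap, fromBlocks_multiply]
  simp only [Matrix.mul_zero, Matrix.zero_mul, Matrix.mul_one, Matrix.one_mul,
    zero_add, add_zero]
  exact fromBlocks_one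

lemma Kswap_transpose : (Kswap n)ᵀ = Kswap n := by
  rw [Kswap, fromBlocks_transpose]
  simp

lemma negJ : -(Jmat n) = fromBlocks 0 (-1) 1 0 := by
  rw [Jmat, fromBlocks_neg]
  norm_num

lemma Kswap_J_Kswap : (Kswap n)ᵀ * Jmat n * Kswap n = -(Jmat n) := by
  rw [negJ, Kswap_transpose, Kswap, Jmat, fromBlocks_multiply, fromBlocks_multiply]
  simp only [Matrix.mul_zero, Matrix.zero_mul, Matrix.mul_one, Matrix.one_mul,
    zero_add, add_zero, Matrix.mul_neg, Matrix.neg_mul, neg_zero]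

lemma J_mul_negJ : Jmat n * -(Jmat n) = 1 := by
  rw [negJ, Jmat, fromBlocks_multiply]
  simp only [Matrix.mul_zero, Matrix.zero_mul, Matrix.mul_one, Matrix.one_mul,
    zero_add, add_zero, neg_zero, Matrix.mul_neg, Matrix.neg_mul, neg_neg]
  exact fromBlocks_one

lemma symplectic_det_isUnit (hg : IsSymplectic g) : IsUnit g.det := by
  have hJd : IsUnit (Jmat n).det := by
    have h : (Jmat n).det * (-(Jmat n)).det = 1 := by
      rw [← det_mul, J_mul_negJ, det_one]
    exact IsUnit.of_mul_eq_one _ h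
  have hdet := congrArg Matrix.det hg
  rw [Matrix.det_mul, Matrix.det_mul, det_transpose] at hdet
  have hJd0 : (Jmat n).det ≠ 0 := hJd.ne_zero
  have h2 : g.det * g.det = 1 := by
    have h3 : (Jmat n).det * (g.det * g.det) = (Jmat n).det * 1 := by
      linear_combination hdet
    exact mul_left_cancel₀ hJd0 h3
  exact IsUnit.of_mul_eq_one _ h2

lemma symplectic_inv (hg : IsSymplectic g) : (g⁻¹)ᵀ * Jmat n * g⁻¹ = Jmat n := by
  have hdg := symplectic_det_isUnit hg
  have h1 : g * g⁻¹ = 1 := mul_nonsing_inv _ hdg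
  calc (g⁻¹)ᵀ * Jmat n * g⁻¹ = (g⁻¹)ᵀ * (gᵀ * Jmat n * g) * g⁻¹ := by rw [hg]
    _ = ((g * g⁻¹)ᵀ) * Jmat n * (g * g⁻¹) := by
        rw [transpose_mul]
        noncomm_ring
    _ = Jmat n := by rw [h1, transpose_one, Matrix.one_mul, Matrix.mul_one]

end MainGlue

end Stmt13

theorem stmt13 (n : ℕ) (X Xb S Sb : Matrix (Fin n) (Fin n) ℝ)
    (hX : IsUnit X) (hXb : IsUnit Xb)
    (hXr : ∀ μ : ℂ, (X.map (algebraMap ℝ ℂ)).charpoly.IsRoot μ → ‖μ‖ ≤ 1)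
    (hXbr : ∀ μ : ℂ, (Xb.map (algebraMap ℝ ℂ)).charpoly.IsRoot μ → ‖μ‖ ≤ 1)
    (hcrit : (∃ μ : ℂ, (X.map (algebraMap ℝ ℂ)).charpoly.IsRoot μ ∧ ‖μ‖ = 1) ∨
      (∃ μ : ℂ, (Xb.map (algebraMap ℝ ℂ)).charpoly.IsRoot μ ∧ ‖μ‖ = 1))
    (hS : S.PosDef) (hSb : Sb.PosDef) :
    let c := Matrix.fromBlocks X 0 (X + Xᵀ⁻¹ * S) Xᵀ⁻¹
    let cb := Matrix.fromBlocks Xbᵀ⁻¹ (-Xbᵀ⁻¹ - Sb * Xb) 0 Xb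
    IsSymplectic c ∧ IsSymplectic cb ∧
      ¬ ∃ g : Matrix (Fin n ⊕ Fin n) (Fin n ⊕ Fin n) ℝ,
          IsSymplectic g ∧ g * cb * g⁻¹ = c⁻¹ := by
  intro c cb
  open Stmt13 Polynomial in
  have hSsym : Sᵀ = S := by
    rw [← conjTranspose_eq_transpose_of_trivial]; exact hS.1
  have hSbsym : Sbᵀ = Sb := by
    rw [← conjTranspose_eq_transpose_of_trivial]; exact hSb.1
  have hSpsd : ∀ y : Fin n → ℝ, 0 ≤ y ⬝ᵥ (S *ᵥ y) := by
    intro y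
    by_cases hy : y = 0
    · subst hy; simp
    · have := hS.dotProduct_mulVec_pos hy
      simpa using this.le
  have hSbpsd : ∀ y : Fin n → ℝ, 0 ≤ y ⬝ᵥ (Sb *ᵥ y) := by
    intro y
    by_cases hy : y = 0
    · subst hy; simp
    · have := hSb.dotProduct_mulVec_pos hy
      simpa using this.le
  refine ⟨symp_c hX hSsym, symp_cb hXb hSbsym, ?_⟩
  rintro ⟨g, hg, hconj⟩
  -- determinant facts
  have hdX : IsUnit X.det := (isUnit_iff_isUnit_det X).mp hX
  have hdXT : IsUnit Xᵀ.det := by rwa [det_transpose]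
  have hdXb : IsUnit Xb.det := (isUnit_iff_isUnit_det Xb).mp hXb
  have hdXbT : IsUnit Xbᵀ.det := by rwa [det_transpose]
  have hdg : IsUnit g.det := symplectic_det_isUnit hg
  -- real-side matrices
  set A1r : Matrix (Fin n ⊕ Fin n) (Fin n ⊕ Fin n) ℝ
    := fromBlocks X⁻¹ 0 (-(Xᵀ + S * X⁻¹)) Xᵀ with hA1r
  set A2r : Matrix (Fin n ⊕ Fin n) (Fin n ⊕ Fin n) ℝ
    := fromBlocks Xb 0 (-(Xbᵀ⁻¹ + Sb * Xb)) Xbᵀ⁻¹ with hA2r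
  have hcinv : c⁻¹ = A1r := c_inv hX
  have hgcb : g * cb = A1r * g := by
    calc g * cb = g * cb * g⁻¹ * g := (nonsing_inv_mul_cancel_right _ _ hdg).symm
      _ = A1r * g := by rw [hconj, hcinv]
  have hKcbK : Kswap n * cb * Kswap n = A2r := by
    rw [Kswap, hA2r, show cb = fromBlocks Xbᵀ⁻¹ (-Xbᵀ⁻¹ - Sb * Xb) 0 Xb from rfl,
      fromBlocks_multiply, fromBlocks_multiply]
    simp only [Matrix.mul_zero, Matrix.zero_mul, Matrix.mul_one, Matrix.one_mul,
      zero_add, add_zero]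
    congr 1
    rw [neg_add]
    abel
  -- real intertwiners
  set Hr : Matrix (Fin n ⊕ Fin n) (Fin n ⊕ Fin n) ℝ := g * Kswap n with hHr
  set Hr' : Matrix (Fin n ⊕ Fin n) (Fin n ⊕ Fin n) ℝ := Kswap n * g⁻¹ with hHr'
  have hHH' : Hr * Hr' = 1 := by
    rw [hHr, hHr', Matrix.mul_assoc, ← Matrix.mul_assoc (Kswap n), Kswap_mul_Kswap,
      Matrix.one_mul, mul_nonsing_inv _ hdg]
  have hH'H : Hr' * Hr = 1 := by
    rw [hHr, hHr', Matrix.mul_assoc, ← Matrix.mul_assoc g⁻¹, nonsing_inv_mul _ hdg,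
      Matrix.one_mul, Kswap_mul_Kswap]
  have hHrJ : Hrᵀ * Jmat n * Hr = -(Jmat n) := by
    rw [hHr, transpose_mul]
    calc (Kswap n)ᵀ * gᵀ * Jmat n * (g * Kswap n)
        = (Kswap n)ᵀ * (gᵀ * Jmat n * g) * Kswap n := by noncomm_ring
      _ = -(Jmat n) := by rw [hg, Kswap_J_Kswap]
  have hHr'J : Hr'ᵀ * Jmat n * Hr' = -(Jmat n) := by
    rw [hHr', transpose_mul]
    calc (g⁻¹)ᵀ * (Kswap n)ᵀ * Jmat n * (Kswap n * g⁻¹)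
        = (g⁻¹)ᵀ * ((Kswap n)ᵀ * Jmat n * Kswap n) * g⁻¹ := by noncomm_ring
      _ = (g⁻¹)ᵀ * -(Jmat n) * g⁻¹ := by rw [Kswap_J_Kswap]
      _ = -((g⁻¹)ᵀ * Jmat n * g⁻¹) := by noncomm_ring
      _ = -(Jmat n) := by rw [symplectic_inv hg]
  have hint_r : Hr * A2r = A1r * Hr := by
    rw [hHr, ← hKcbK]
    calc g * Kswap n * (Kswap n * cb * Kswap n)
        = g * (Kswap n * Kswap n) * cb * Kswap n := by noncomm_ring
      _ = g * cb * Kswap n := by rw [Kswap_mul_Kswap, Matrix.mul_one]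
      _ = A1r * (g * Kswap n) := by rw [hgcb, Matrix.mul_assoc]
  have hint'_r : Hr' * A1r = A2r * Hr' := by
    have hcbg : cb * g⁻¹ = g⁻¹ * A1r := by
      calc cb * g⁻¹ = g⁻¹ * (g * cb) * g⁻¹ := by
            rw [← Matrix.mul_assoc, nonsing_inv_mul _ hdg, Matrix.one_mul]
        _ = g⁻¹ * A1r * (g * g⁻¹) := by rw [hgcb]; noncomm_ring
        _ = g⁻¹ * A1r := by rw [mul_nonsing_inv _ hdg, Matrix.mul_one]
    rw [hHr', ← hKcbK]
    calc Kswap n * g⁻¹ * A1r = Kswap n * (g⁻¹ * A1r) := by rw [Matrix.mul_assoc]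
      _ = Kswap n * (cb * g⁻¹) := by rw [hcbg]
      _ = Kswap n * cb * (Kswap n * Kswap n) * g⁻¹ := by rw [Kswap_mul_Kswap]; noncomm_ring
      _ = Kswap n * cb * Kswap n * (Kswap n * g⁻¹) := by noncomm_ring
  -- complex side
  set Y1 := φm (X⁻¹) with hY1
  set D1 := φm (Xᵀ) with hD1
  set S1 := φm S with hS1
  set Y2 := φm Xb with hY2
  set D2 := φm (Xbᵀ⁻¹) with hD2
  set S2 := φm Sb with hS2
  have hA1c : φm A1r = fromBlocks Y1 0 (-(D1 + S1 * Y1)) D1 := by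
    rw [hA1r, φm_fromBlocks, φm_neg, φm_add, φm_mul]
    rfl
  have hA2c : φm A2r = fromBlocks Y2 0 (-(D2 + S2 * Y2)) D2 := by
    rw [hA2r, φm_fromBlocks, φm_neg, φm_add, φm_mul]
    rfl
  have hJc : φm (Jmat n) = Jc n := by
    rw [Jmat, Jc, φm_fromBlocks, φm_neg, φm_one]
    rfl
  set Hc := φm Hr with hHc
  set Hc' := φm Hr' with hHc'
  have hHcJ : Hcᵀ * Jc n * Hc = -(Jc n) := by
    rw [hHc, ← hJc, ← φm_transpose, ← φm_mul, ← φm_mul, hHrJ, φm_neg]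
  have hHc'J : Hc'ᵀ * Jc n * Hc' = -(Jc n) := by
    rw [hHc', ← hJc, ← φm_transpose, ← φm_mul, ← φm_mul, hHr'J, φm_neg]
  have hintc : Hc * (fromBlocks Y2 0 (-(D2 + S2 * Y2)) D2)
      = (fromBlocks Y1 0 (-(D1 + S1 * Y1)) D1) * Hc := by
    rw [← hA1c, ← hA2c, hHc, ← φm_mul, ← φm_mul, hint_r]
  have hintc' : Hc' * (fromBlocks Y1 0 (-(D1 + S1 * Y1)) D1)
      = (fromBlocks Y2 0 (-(D2 + S2 * Y2)) D2) * Hc' := by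
    rw [← hA1c, ← hA2c, hHc', ← φm_mul, ← φm_mul, hint'_r]
  have hYD1 : Y1ᵀ * D1 = 1 := by
    rw [hY1, hD1, ← φm_transpose, ← φm_mul, ← transpose_mul, mul_nonsing_inv _ hdX,
      transpose_one, φm_one]
  have hYD2 : Y2ᵀ * D2 = 1 := by
    rw [hY2, hD2, ← φm_transpose, ← φm_mul, mul_nonsing_inv _ hdXbT, φm_one]
  have hY1real : Y1.map (starRingEnd ℂ) = Y1 := φm_real _
  have hY2real : Y2.map (starRingEnd ℂ) = Y2 := φm_real _
  have hHcreal : Hc.map (starRingEnd ℂ) = Hc := φm_real _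
  have hHc'real : Hc'.map (starRingEnd ℂ) = Hc' := φm_real _
  have hS1psd : ∀ x : Fin n → ℂ, ∃ r : ℝ, 0 ≤ r ∧ star x ⬝ᵥ (S1 *ᵥ x) = (r : ℂ) :=
    psd_transport hSsym hSpsd
  have hS2psd : ∀ x : Fin n → ℂ, ∃ r : ℝ, 0 ≤ r ∧ star x ⬝ᵥ (S2 *ᵥ x) = (r : ℂ) :=
    psd_transport hSbsym hSbpsd
  -- the eigenvalue cases
  rcases hcrit with ⟨lam, hroot, habs⟩ | ⟨lam, hroot, habs⟩
  · -- unit root of X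
    obtain ⟨x1, hx1, heix⟩ := eigvec_of_root _ hroot
    have hlam : lam * (starRingEnd ℂ) lam = 1 := by
      rw [Complex.mul_conj]
      norm_cast
      rw [Complex.normSq_eq_norm_sq, habs, one_pow]
    have hlam0 : lam ≠ 0 := by
      intro h; rw [h, zero_mul] at hlam; exact zero_ne_one hlam
    have hμ : lam⁻¹ * (starRingEnd ℂ) lam⁻¹ = 1 := by
      rw [map_inv₀, ← mul_inv, hlam, inv_one]
    have hYX : Y1 * φm X = 1 := by
      rw [hY1, ← φm_mul, nonsing_inv_mul _ hdX, φm_one]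
    have heig1 : Y1 *ᵥ x1 = lam⁻¹ • x1 := by
      have h1 : Y1 *ᵥ ((X.map (algebraMap ℝ ℂ)) *ᵥ x1) = x1 := by
        rw [mulVec_mulVec, hYX, one_mulVec]
      rw [heix, mulVec_smul] at h1
      rw [eq_comm, inv_smul_eq_iff₀ hlam0]
      exact h1.symm
    have hmaster := master hYD1 hY1real hYD2 hY2real hS1psd hS2psd
      hHcreal hHcJ hHc'real hHc'J hintc hintc' hμ
    exact final hx1 heig1 (fun k v hv => ((hmaster k).1) v hv)
  · -- unit root of Xb
    obtain ⟨x1, hx1, heix⟩ := eigvec_of_root _ hroot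
    have hlam : lam * (starRingEnd ℂ) lam = 1 := by
      rw [Complex.mul_conj]
      norm_cast
      rw [Complex.normSq_eq_norm_sq, habs, one_pow]
    have heig2 : Y2 *ᵥ x1 = lam • x1 := heix
    have hmaster := master hYD1 hY1real hYD2 hY2real hS1psd hS2psd
      hHcreal hHcJ hHc'real hHc'J hintc hintc' hlam
    exact final hx1 heig2 (fun k v hv => ((hmaster k).2) v hv)
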